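/- arXiv:2512.21556 — 2 statements merged into one kernel-verified Lean document; each statement's English description precedes it below -/
import Mathlib

section
/- Let H be a finite weakly nilpotent hypergroup and M a maximal closed subset of H. Then M is strongly normal in H. -/
/-- A hypergroup: a set with a hypermultiplication, identity and involution
satisfying (H1), (H2), (H3). -/
structure Hypergroup (H : Type*) where
  hmul : H → H → Set H
  one : H
  star : H → H
  assoc : ∀ p q r : H, (⋃ x ∈ hmul q r, hmul p x) = ⋃ x ∈ hmul p q, hmul x r
  hmul_one : ∀ s : H, hmul s one = {s}
  inv_left : ∀ p q r : H, r ∈ hmul p q → q ∈ hmul (star p) r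
  inv_right : ∀ p q r : H, r ∈ hmul p q → p ∈ hmul r (star q)

namespace Hypergroup

variable {H : Type*} (G : Hypergroup H)

/-- Complex (set) product: `AB = ⋃_{a ∈ A, b ∈ B} ab`. -/
def smul (A B : Set H) : Set H := ⋃ a ∈ A, ⋃ b ∈ B, G.hmul a b

/-- `A* = { a* | a ∈ A }`. -/
def sstar (A : Set H) : Set H := G.star '' A

/-- A nonempty subset `F` is closed if `F*F ⊆ F`. -/
def IsClosed (F : Set H) : Prop := F.Nonempty ∧ G.smul (G.sstar F) F ⊆ F

/-- `F` is normal in `K`: `Fk ⊆ kF` for all `k ∈ K`. -/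
def IsNormalIn (F K : Set H) : Prop := ∀ k ∈ K, G.smul F {k} ⊆ G.smul {k} F

/-- `F` is strongly normal in `K`: `k*Fk ⊆ F` for all `k ∈ K`. -/
def IsStronglyNormalIn (F K : Set H) : Prop :=
  ∀ k ∈ K, G.smul (G.smul {G.star k} F) {k} ⊆ F

/-- An element `s` is thin if `s*s = {1}`. -/
def IsThinElem (s : H) : Prop := G.hmul (G.star s) s = {G.one}

/-- A hypergroup is thin if all elements are thin. -/
def IsThin : Prop := ∀ s : H, G.IsThinElem s

/-- The center `Z(H) = {h | hx = xh for all x, h*h = {1}}`. -/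
def center : Set H :=
  {h | (∀ x : H, G.hmul h x = G.hmul x h) ∧ G.hmul (G.star h) h = {G.one}}

/-- The class `h^F := FhF`. -/
def cls (F : Set H) (h : H) : Set H := G.smul (G.smul F {h}) F

/-- The quotient set `H//F := { h^F | h ∈ H }`. -/
def quotSet (F : Set H) : Set (Set H) := Set.range (G.cls F)

/-- The class `h^F` as an element of `H//F`. -/
def qcls (F : Set H) (h : H) : G.quotSet F := ⟨G.cls F h, h, rfl⟩

/-- The full preimage in `H` of the center of the quotient `H//T`:
`{h | h^T ∈ Z(H//T)}`, i.e. `h^T` commutes with all classes `y^T` and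
`(h^T)*(h^T) = {1^T} = {T}`. -/
def qCenterPre (T : Set H) : Set H :=
  {h | (∀ y : H, G.cls T '' (G.smul (G.smul {h} T) {y}) =
          G.cls T '' (G.smul (G.smul {y} T) {h})) ∧
       G.cls T '' (G.smul (G.smul {G.star h} T) {h}) = {T}}

/-- The upper central series: `Z₀(H) = {1}`, and `Zᵢ₊₁(H)` is the full preimage
of `Z(H//Zᵢ(H))`, i.e. `Zᵢ₊₁(H)//Zᵢ(H) = Z(H//Zᵢ(H))`. -/
def upperCentral : ℕ → Set H
  | 0 => {G.one}
  | n + 1 => G.qCenterPre (upperCentral n)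

/-- A hypergroup is weakly nilpotent if `Zₙ(H) = H` for some `n`. -/
def WeaklyNilpotent : Prop := ∃ n : ℕ, G.upperCentral n = Set.univ

/-- `F` is subnormal in `K` via a chain of successively normal closed subsets. -/
def IsSubnormalIn (F K : Set H) : Prop :=
  ∃ n : ℕ, ∃ C : ℕ → Set H, C 0 = F ∧ C n = K ∧
    ∀ i < n, C i ⊆ C (i + 1) ∧ G.IsClosed (C (i + 1)) ∧ G.IsNormalIn (C i) (C (i + 1))

/-- The quotient `K//N` is thin: `(k^N)*(k^N) = {1^N}` for all `k ∈ K`. -/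
def QuotThin (N K : Set H) : Prop :=
  ∀ k ∈ K, G.cls N '' (G.smul (G.smul {G.star k} N) {k}) = {N}

/-- A residually-thin chain from `{1}` to `K`. -/
def RTChainOn (K : Set H) (n : ℕ) (C : ℕ → Set H) : Prop :=
  C 0 = {G.one} ∧ C n = K ∧
    ∀ i < n, C i ⊆ C (i + 1) ∧ G.IsClosed (C (i + 1)) ∧ G.QuotThin (C i) (C (i + 1))

/-- The valency `n_K = ∏ |Cᵢ₊₁//Cᵢ|` computed along some RT chain for `K`. -/
def HasValencyOn (K : Set H) (m : ℕ) : Prop :=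
  ∃ n C, G.RTChainOn K n C ∧
    m = ∏ i ∈ Finset.range n, Nat.card (G.cls (C i) '' C (i + 1))

/-- A closed `p`-subset: a closed subset whose valency is a power of `p`. -/
def PSubsetOn (p : ℕ) (K : Set H) : Prop :=
  G.IsClosed K ∧ ∃ m k : ℕ, G.HasValencyOn K m ∧ m = p ^ k

/-- `h` is `p`-valenced in `K`: for every subnormal closed `p`-subset `U` of `K`
such that `(h*)^U h^U` consists of thin elements of the quotient,
`n_{(h*)^U h^U} = |(h*)^U h^U|` is a power of `p`. -/
def PValencedElemOn (p : ℕ) (K : Set H) (h : H) : Prop :=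
  ∀ U : Set H, G.IsClosed U → U ⊆ K → G.IsSubnormalIn U K → G.PSubsetOn p U →
    (∀ x ∈ G.smul (G.smul {G.star h} U) {h},
      G.cls U '' (G.smul (G.smul {G.star x} U) {x}) = {U}) →
    ∃ k : ℕ, Nat.card (G.cls U '' (G.smul (G.smul {G.star h} U) {h})) = p ^ k

/-- `K` is `p`-valenced if all its elements are. -/
def PValencedOn (p : ℕ) (K : Set H) : Prop := ∀ h ∈ K, G.PValencedElemOn p K h


/-! ### Auxiliary lemmas -/

theorem mem_smul' {A B : Set H} {x : H} :
    x ∈ G.smul A B ↔ ∃ a ∈ A, ∃ b ∈ B, x ∈ G.hmul a b := by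
  simp [Hypergroup.smul]

theorem smul_mono' {A A' B B' : Set H} (hA : A ⊆ A') (hB : B ⊆ B') :
    G.smul A B ⊆ G.smul A' B' := by
  intro x hx
  rw [G.mem_smul'] at hx ⊢
  obtain ⟨a, ha, b, hb, h⟩ := hx
  exact ⟨a, hA ha, b, hB hb, h⟩

theorem hmul_mem_smul {A B : Set H} {a b x : H} (ha : a ∈ A) (hb : b ∈ B)
    (hx : x ∈ G.hmul a b) : x ∈ G.smul A B :=
  (G.mem_smul').2 ⟨a, ha, b, hb, hx⟩

theorem sA (A B C : Set H) :
    G.smul (G.smul A B) C = G.smul A (G.smul B C) := by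
  ext w
  simp only [G.mem_smul']
  constructor
  · rintro ⟨u, ⟨a, ha, b, hb, hu⟩, c, hc, hw⟩
    have h1 : w ∈ ⋃ x ∈ G.hmul a b, G.hmul x c := Set.mem_biUnion hu hw
    rw [← G.assoc] at h1
    obtain ⟨x, hx, hw'⟩ := Set.mem_iUnion₂.mp h1
    exact ⟨a, ha, x, ⟨b, hb, c, hc, hx⟩, hw'⟩
  · rintro ⟨a, ha, x, ⟨b, hb, c, hc, hx⟩, hw⟩
    have h1 : w ∈ ⋃ v ∈ G.hmul b c, G.hmul a v := Set.mem_biUnion hx hw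
    rw [G.assoc] at h1
    obtain ⟨u, hu, hw'⟩ := Set.mem_iUnion₂.mp h1
    exact ⟨u, ⟨a, ha, b, hb, hu⟩, c, hc, hw'⟩

theorem smul_singleton' (a b : H) : G.smul {a} {b} = G.hmul a b := by
  simp [Hypergroup.smul]

theorem one_mem_star_hmul (s : H) : G.one ∈ G.hmul (G.star s) s := by
  have hs : s ∈ G.hmul s G.one := by rw [G.hmul_one]; rfl
  exact G.inv_left s G.one s hs

theorem star_star' (s : H) : G.star (G.star s) = s := by
  have h1 := G.one_mem_star_hmul s
  have h2 := G.inv_left (G.star s) s G.one h1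
  rw [G.hmul_one] at h2
  exact h2.symm

theorem one_mem_hmul_star (s : H) : G.one ∈ G.hmul s (G.star s) := by
  have := G.one_mem_star_hmul (G.star s)
  rwa [G.star_star'] at this

theorem star_one' : G.star G.one = G.one := by
  have h1 : G.one ∈ G.hmul G.one G.one := by rw [G.hmul_one]; rfl
  have h2 := G.inv_left G.one G.one G.one h1
  rw [G.hmul_one] at h2
  exact h2.symm

theorem one_hmul' (s : H) : G.hmul G.one s = {s} := by
  ext x
  constructor
  · intro hx
    have h1 := G.inv_right G.one s x hx
    have h2 := G.inv_left x (G.star s) G.one h1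
    rw [G.hmul_one] at h2
    have h3 : G.star (G.star s) = G.star (G.star x) := congrArg G.star h2
    rw [G.star_star', G.star_star'] at h3
    exact h3.symm
  · rintro rfl
    have := G.inv_right x (G.star x) G.one (G.one_mem_hmul_star x)
    rwa [G.star_star'] at this

theorem star_mem_hmul' {p q c : H} (h : c ∈ G.hmul p q) :
    G.star c ∈ G.hmul (G.star q) (G.star p) := by
  have h1 := G.inv_right p q c h
  have h2 := G.inv_left c (G.star q) p h1
  exact G.inv_right (G.star c) p (G.star q) h2

theorem hmul_nonempty (p q : H) : (G.hmul p q).Nonempty := by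
  have h1 : p ∈ ⋃ x ∈ G.hmul q (G.star q), G.hmul p x := by
    refine Set.mem_biUnion (G.one_mem_hmul_star q) ?_
    rw [G.hmul_one]; rfl
  rw [G.assoc] at h1
  obtain ⟨x, hx, -⟩ := Set.mem_iUnion₂.mp h1
  exact ⟨x, hx⟩

theorem mem_sstar' {A : Set H} {x : H} : x ∈ G.sstar A ↔ ∃ a ∈ A, G.star a = x := by
  simp [Hypergroup.sstar]

theorem one_mem_closed {T : Set H} (hT : G.IsClosed T) : G.one ∈ T := by
  obtain ⟨m, hm⟩ := hT.1
  refine hT.2 (G.hmul_mem_smul ?_ hm (G.one_mem_star_hmul m))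
  exact (G.mem_sstar').2 ⟨m, hm, rfl⟩

theorem star_mem_closed {T : Set H} (hT : G.IsClosed T) {m : H} (hm : m ∈ T) :
    G.star m ∈ T := by
  refine hT.2 (G.hmul_mem_smul ((G.mem_sstar').2 ⟨m, hm, rfl⟩)
    (G.one_mem_closed hT) ?_)
  rw [G.hmul_one]; rfl

theorem smul_self_subset {T : Set H} (hT : G.IsClosed T) : G.smul T T ⊆ T := by
  intro x hx
  rw [G.mem_smul'] at hx
  obtain ⟨a, ha, b, hb, h⟩ := hx
  exact hT.2 (G.hmul_mem_smul ((G.mem_sstar').2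
    ⟨G.star a, G.star_mem_closed hT ha, G.star_star' a⟩) hb h)

theorem hmul_subset_closed {T : Set H} (hT : G.IsClosed T) {a b : H}
    (ha : a ∈ T) (hb : b ∈ T) : G.hmul a b ⊆ T :=
  fun x hx => G.smul_self_subset hT (G.hmul_mem_smul ha hb hx)

theorem smul_TT {T : Set H} (hT : G.IsClosed T) : G.smul T T = T := by
  refine le_antisymm (G.smul_self_subset hT) fun t ht => ?_
  exact G.hmul_mem_smul ht (G.one_mem_closed hT) (by rw [G.hmul_one]; rfl)

theorem smul_T_smul_T {T : Set H} (hT : G.IsClosed T) (A : Set H) :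
    G.smul T (G.smul T A) = G.smul T A := by
  rw [← G.sA, G.smul_TT hT]

theorem pad_left {T : Set H} (hT : G.IsClosed T) {A : Set H} : A ⊆ G.smul T A :=
  fun a ha => G.hmul_mem_smul (G.one_mem_closed hT) ha (by rw [G.one_hmul']; rfl)

theorem pad_right {T : Set H} (hT : G.IsClosed T) {A : Set H} : A ⊆ G.smul A T :=
  fun a ha => G.hmul_mem_smul ha (G.one_mem_closed hT) (by rw [G.hmul_one]; rfl)

theorem hmul_subset_pad {T : Set H} (hT : G.IsClosed T) (p q : H) :
    G.hmul p q ⊆ G.smul (G.smul {p} T) {q} := by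
  rw [← G.smul_singleton' p q]
  exact G.smul_mono' (G.pad_right hT) le_rfl

theorem mem_cls_self {T : Set H} (hT : G.IsClosed T) (v : H) : v ∈ G.cls T v :=
  G.hmul_mem_smul (G.hmul_mem_smul (G.one_mem_closed hT) rfl
    (by rw [G.one_hmul']; rfl)) (G.one_mem_closed hT) (by rw [G.hmul_one]; rfl)

theorem cls_subset_of_mem {T A : Set H} {x : H} (hx : x ∈ A) :
    G.cls T x ⊆ G.smul (G.smul T A) T :=
  G.smul_mono' (G.smul_mono' le_rfl (Set.singleton_subset_iff.2 hx)) le_rfl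

theorem mem_TAT_iff {T A : Set H} {w : H} :
    w ∈ G.smul (G.smul T A) T ↔ ∃ a ∈ A, w ∈ G.cls T a := by
  constructor
  · intro hw
    rw [G.mem_smul'] at hw
    obtain ⟨u, hu, t2, ht2, hw⟩ := hw
    rw [G.mem_smul'] at hu
    obtain ⟨t1, ht1, a, ha, hu⟩ := hu
    exact ⟨a, ha, G.hmul_mem_smul (G.hmul_mem_smul ht1 rfl hu) ht2 hw⟩
  · rintro ⟨a, ha, hw⟩
    exact G.cls_subset_of_mem ha hw

theorem cls_subset_cls {T : Set H} (hT : G.IsClosed T) {u v : H}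
    (hv : v ∈ G.cls T u) : G.cls T v ⊆ G.cls T u := by
  have h1 : G.cls T v ⊆ G.smul (G.smul T (G.cls T u)) T :=
    G.smul_mono' (G.smul_mono' le_rfl (Set.singleton_subset_iff.2 hv)) le_rfl
  have e : G.smul (G.smul T (G.cls T u)) T = G.cls T u := by
    unfold Hypergroup.cls
    calc G.smul (G.smul T (G.smul (G.smul T {u}) T)) T
        = G.smul (G.smul (G.smul T T) {u}) (G.smul T T) := by
          simp only [G.sA]
      _ = G.smul (G.smul T {u}) T := by rw [G.smul_TT hT]
  exact h1.trans e.le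

theorem mem_cls_symm {T : Set H} (hT : G.IsClosed T) {u v : H}
    (hv : v ∈ G.cls T u) : u ∈ G.cls T v := by
  rw [Hypergroup.cls, G.mem_smul'] at hv
  obtain ⟨p, hp, t2, ht2, hv⟩ := hv
  rw [G.mem_smul'] at hp
  obtain ⟨t1, ht1, u', hu', hp⟩ := hp
  rw [show u' = u from hu'] at hp
  have h1 : p ∈ G.hmul v (G.star t2) := G.inv_right p t2 v hv
  have h2 : u ∈ G.hmul (G.star t1) p := G.inv_left t1 u p hp
  have h3 : u ∈ G.smul {G.star t1} (G.smul {v} {G.star t2}) :=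
    G.hmul_mem_smul rfl ((G.smul_singleton' v (G.star t2)) ▸ h1) h2
  rw [← G.sA] at h3
  exact G.smul_mono' (G.smul_mono'
    (Set.singleton_subset_iff.2 (G.star_mem_closed hT ht1)) le_rfl)
    (Set.singleton_subset_iff.2 (G.star_mem_closed hT ht2)) h3

theorem cls_eq_of_mem {T : Set H} (hT : G.IsClosed T) {u v : H}
    (hv : v ∈ G.cls T u) : G.cls T v = G.cls T u :=
  le_antisymm (G.cls_subset_cls hT hv) (G.cls_subset_cls hT (G.mem_cls_symm hT hv))

theorem cls_eq_self_of_mem {T : Set H} (hT : G.IsClosed T) {v : H} (hv : v ∈ T) :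
    G.cls T v = T := by
  refine le_antisymm ?_ fun t ht => ?_
  · intro w hw
    rw [Hypergroup.cls, G.mem_smul'] at hw
    obtain ⟨p, hp, t2, ht2, hw⟩ := hw
    rw [G.mem_smul'] at hp
    obtain ⟨t1, ht1, v', (rfl : v' = v), hp⟩ := hp
    exact G.hmul_subset_closed hT (G.hmul_subset_closed hT ht1 hv hp) ht2 hw
  · obtain ⟨w, hw⟩ := G.hmul_nonempty t (G.star v)
    have hwT : w ∈ T := G.hmul_subset_closed hT ht (G.star_mem_closed hT hv) hw
    have h1 : t ∈ G.hmul w v := by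
      have := G.inv_right t (G.star v) w hw
      rwa [G.star_star'] at this
    exact G.hmul_mem_smul (G.hmul_mem_smul hwT rfl h1) (G.one_mem_closed hT)
      (by rw [G.hmul_one]; rfl)

theorem thin_extract {T : Set H} (hT : G.IsClosed T) {A : Set H}
    (h : G.cls T '' A = {T}) : A ⊆ T := by
  intro x hx
  have h1 : G.cls T x ∈ ({T} : Set (Set H)) := h ▸ Set.mem_image_of_mem _ hx
  rw [Set.mem_singleton_iff] at h1
  exact h1 ▸ G.mem_cls_self hT x

theorem cls_image_singleton {T : Set H} (hT : G.IsClosed T) {A : Set H}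
    (hA : A.Nonempty) (hsub : A ⊆ T) : G.cls T '' A = {T} := by
  refine Set.eq_singleton_iff_nonempty_unique_mem.2 ⟨hA.image _, ?_⟩
  rintro S ⟨x, hx, rfl⟩
  exact G.cls_eq_self_of_mem hT (hsub hx)

theorem sstar_closed {T : Set H} (hT : G.IsClosed T) : G.sstar T = T := by
  ext x
  rw [G.mem_sstar']
  constructor
  · rintro ⟨a, ha, rfl⟩; exact G.star_mem_closed hT ha
  · intro hx; exact ⟨G.star x, G.star_mem_closed hT hx, G.star_star' x⟩

/-- `uf T a b = T (a T b) T`. -/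
def uf (T : Set H) (a b : H) : Set H :=
  G.smul (G.smul T (G.smul (G.smul {a} T) {b})) T

theorem uf_mono_of_image {T : Set H} (hT : G.IsClosed T) {a b c d : H}
    (h : G.cls T '' (G.smul (G.smul {a} T) {b}) =
         G.cls T '' (G.smul (G.smul {c} T) {d})) :
    G.uf T a b ⊆ G.uf T c d := by
  intro w hw
  rw [Hypergroup.uf, G.mem_TAT_iff] at hw ⊢
  obtain ⟨x, hx, hw⟩ := hw
  have h1 : G.cls T x ∈ G.cls T '' (G.smul (G.smul {c} T) {d}) :=
    h ▸ Set.mem_image_of_mem _ hx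
  obtain ⟨y, hy, hxy⟩ := h1
  exact ⟨y, hy, hxy ▸ hw⟩

theorem cond1_uf {T : Set H} (hT : G.IsClosed T) {a y : H}
    (h : G.cls T '' (G.smul (G.smul {a} T) {y}) =
         G.cls T '' (G.smul (G.smul {y} T) {a})) :
    G.uf T a y = G.uf T y a :=
  le_antisymm (G.uf_mono_of_image hT h) (G.uf_mono_of_image hT h.symm)

theorem uf_to_cond1 {T : Set H} (hT : G.IsClosed T) {a y : H}
    (h : G.uf T a y = G.uf T y a) :
    G.cls T '' (G.smul (G.smul {a} T) {y}) =
      G.cls T '' (G.smul (G.smul {y} T) {a}) := by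
  have key : ∀ p q : H, G.uf T p q ⊆ G.uf T q p →
      G.cls T '' (G.smul (G.smul {p} T) {q}) ⊆
        G.cls T '' (G.smul (G.smul {q} T) {p}) := by
    intro p q hpq S hS
    obtain ⟨v, hv, rfl⟩ := hS
    have h1 : v ∈ G.uf T p q := by
      rw [Hypergroup.uf, G.mem_TAT_iff]
      exact ⟨v, hv, G.mem_cls_self hT v⟩
    have h2 := hpq h1
    rw [Hypergroup.uf, G.mem_TAT_iff] at h2
    obtain ⟨u, hu, h2⟩ := h2
    exact ⟨u, hu, (G.cls_eq_of_mem hT h2).symm⟩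
  exact le_antisymm (key a y h.le) (key y a h.ge)

theorem one_mem_starTh {T : Set H} (hT : G.IsClosed T) (h : H) :
    G.one ∈ G.smul (G.smul {G.star h} T) {h} :=
  G.hmul_mem_smul (G.pad_right hT rfl) rfl (G.one_mem_star_hmul h)

theorem T_subset_TAT {T A : Set H} (hT : G.IsClosed T) (hA : G.one ∈ A) :
    T ⊆ G.smul (G.smul T A) T := fun t ht =>
  G.hmul_mem_smul (G.hmul_mem_smul ht hA (by rw [G.hmul_one]; rfl))
    (G.one_mem_closed hT) (by rw [G.hmul_one]; rfl)

theorem smul_one_right (A : Set H) : G.smul A {G.one} = A := by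
  ext x
  rw [G.mem_smul']
  constructor
  · rintro ⟨a, ha, b, (rfl : b = G.one), hx⟩
    rw [G.hmul_one] at hx
    exact hx ▸ ha
  · intro hx
    exact ⟨x, hx, G.one, rfl, by rw [G.hmul_one]; rfl⟩

theorem smul_one_left (A : Set H) : G.smul {G.one} A = A := by
  ext x
  rw [G.mem_smul']
  constructor
  · rintro ⟨a, (rfl : a = G.one), b, hb, hx⟩
    rw [G.one_hmul'] at hx
    exact hx ▸ hb
  · intro hx
    exact ⟨G.one, rfl, x, hx, by rw [G.one_hmul']; rfl⟩

theorem cond2_to_uf {T : Set H} (hT : G.IsClosed T) {h : H}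
    (h2 : G.cls T '' (G.smul (G.smul {G.star h} T) {h}) = {T}) :
    G.uf T (G.star h) h = T := by
  refine le_antisymm ?_ (G.T_subset_TAT hT (G.one_mem_starTh hT h))
  have himg : G.cls T '' (G.smul (G.smul {G.star h} T) {h}) =
      G.cls T '' (G.smul (G.smul {G.one} T) {G.one}) := by
    rw [h2, G.smul_one_left, G.smul_one_right]
    exact (G.cls_image_singleton hT ⟨G.one, G.one_mem_closed hT⟩ le_rfl).symm
  refine (G.uf_mono_of_image hT himg).trans ?_
  rw [Hypergroup.uf, G.smul_one_left, G.smul_one_right, G.smul_TT hT,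
    G.smul_TT hT]

theorem uf_to_cond2 {T : Set H} (hT : G.IsClosed T) {h : H}
    (hu : G.uf T (G.star h) h = T) :
    G.cls T '' (G.smul (G.smul {G.star h} T) {h}) = {T} := by
  refine G.cls_image_singleton hT ⟨G.one, G.one_mem_starTh hT h⟩ ?_
  intro x hx
  have h1 : x ∈ G.uf T (G.star h) h := by
    rw [Hypergroup.uf, G.mem_TAT_iff]
    exact ⟨x, hx, G.mem_cls_self hT x⟩
  exact hu ▸ h1

theorem sstar_smul (A B : Set H) :
    G.sstar (G.smul A B) = G.smul (G.sstar B) (G.sstar A) := by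
  ext x
  rw [G.mem_sstar', G.mem_smul']
  constructor
  · rintro ⟨c, hc, rfl⟩
    rw [G.mem_smul'] at hc
    obtain ⟨a, ha, b, hb, hc⟩ := hc
    exact ⟨G.star b, (G.mem_sstar').2 ⟨b, hb, rfl⟩, G.star a,
      (G.mem_sstar').2 ⟨a, ha, rfl⟩, G.star_mem_hmul' hc⟩
  · rintro ⟨b', hb', a', ha', hx⟩
    rw [G.mem_sstar'] at hb' ha'
    obtain ⟨b, hb, rfl⟩ := hb'
    obtain ⟨a, ha, rfl⟩ := ha'
    refine ⟨G.star x, ?_, G.star_star' x⟩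
    rw [G.mem_smul']
    have := G.star_mem_hmul' hx
    rw [G.star_star', G.star_star'] at this
    exact ⟨a, ha, b, hb, this⟩

theorem sstar_singleton (a : H) : G.sstar {a} = {G.star a} := by
  simp [Hypergroup.sstar]

theorem sstar_uf {T : Set H} (hT : G.IsClosed T) (a b : H) :
    G.sstar (G.uf T a b) = G.uf T (G.star b) (G.star a) := by
  rw [Hypergroup.uf, Hypergroup.uf, G.sstar_smul, G.sstar_smul, G.sstar_smul,
    G.sstar_smul, G.sstar_closed hT, G.sstar_singleton, G.sstar_singleton]
  simp only [G.sA]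

theorem qcp_one {T : Set H} (hT : G.IsClosed T) : G.one ∈ G.qCenterPre T := by
  constructor
  · intro y
    rw [G.smul_one_left, G.smul_one_right]
    have himg : ∀ B : Set H, B.Nonempty → B ⊆ G.cls T y → G.cls T '' B = {G.cls T y} := by
      intro B hB hsub
      refine Set.eq_singleton_iff_nonempty_unique_mem.2 ⟨hB.image _, ?_⟩
      rintro S ⟨v, hv, rfl⟩
      exact G.cls_eq_of_mem hT (hsub hv)
    rw [himg (G.smul T {y}) ⟨y, G.pad_left hT rfl⟩ (G.pad_right hT),
      himg (G.smul {y} T) ⟨y, G.pad_right hT rfl⟩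
        (G.smul_mono' (G.pad_left hT) le_rfl)]
  · rw [G.star_one', G.smul_one_left, G.smul_one_right]
    exact G.cls_image_singleton hT ⟨G.one, G.one_mem_closed hT⟩ le_rfl

theorem qcp_star {T : Set H} (hT : G.IsClosed T) {h : H}
    (hh : h ∈ G.qCenterPre T) : G.star h ∈ G.qCenterPre T := by
  obtain ⟨c1, c2⟩ := hh
  constructor
  · intro y
    refine G.uf_to_cond1 hT ?_
    have u1 : G.uf T h (G.star y) = G.uf T (G.star y) h :=
      G.cond1_uf hT (c1 (G.star y))
    have := congrArg G.sstar u1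
    rw [G.sstar_uf hT, G.sstar_uf hT, G.star_star'] at this
    exact this.symm
  · rw [G.star_star']
    rw [c1 (G.star h)]
    exact c2

theorem qcp_mul {T : Set H} (hT : G.IsClosed T) {a b c : H}
    (ha : a ∈ G.qCenterPre T) (hb : b ∈ G.qCenterPre T)
    (hc : c ∈ G.hmul a b) : c ∈ G.qCenterPre T := by
  obtain ⟨a1, a2⟩ := ha
  obtain ⟨b1, b2⟩ := hb
  have conj_a : G.smul (G.smul {G.star a} T) {a} ⊆ T := G.thin_extract hT a2
  have conj_b : G.smul (G.smul {G.star b} T) {b} ⊆ T := G.thin_extract hT b2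
  have ua1 : ∀ y, G.uf T a y = G.uf T y a := fun y => G.cond1_uf hT (a1 y)
  have ub1 : ∀ y, G.uf T b y = G.uf T y b := fun y => G.cond1_uf hT (b1 y)
  -- cls T c = T a T b T
  have hca : {c} ⊆ G.smul (G.smul {a} T) {b} :=
    Set.singleton_subset_iff.2 (G.hmul_subset_pad hT a b hc)
  have e2 : G.cls T c = G.smul (G.smul (G.smul (G.smul T {a}) T) {b}) T := by
    refine le_antisymm ?_ ?_
    · refine (G.smul_mono' (G.smul_mono' le_rfl hca) le_rfl).trans ?_
      simp only [G.sA]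
      exact le_rfl
    · have haa : ({a} : Set H) ⊆ G.smul {c} {G.star b} := by
        rw [G.smul_singleton']
        exact Set.singleton_subset_iff.2 (G.inv_right a b c hc)
      have step1 : G.smul (G.smul (G.smul (G.smul T {a}) T) {b}) T ⊆
          G.smul (G.smul (G.smul (G.smul T (G.smul {c} {G.star b})) T) {b}) T :=
        G.smul_mono' (G.smul_mono' (G.smul_mono' (G.smul_mono' le_rfl haa) le_rfl) le_rfl) le_rfl
      have step2 : G.smul (G.smul (G.smul (G.smul T (G.smul {c} {G.star b})) T) {b}) T =
          G.smul (G.smul T {c}) (G.smul (G.smul (G.smul {G.star b} T) {b}) T) := by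
        simp only [G.sA]
      have step3 : G.smul (G.smul T {c}) (G.smul (G.smul (G.smul {G.star b} T) {b}) T) ⊆
          G.smul (G.smul T {c}) T := by
        refine G.smul_mono' le_rfl ?_
        refine (G.smul_mono' conj_b le_rfl).trans ?_
        rw [G.smul_TT hT]
      exact step1.trans (step2 ▸ step3)
  constructor
  · intro y
    refine G.uf_to_cond1 hT ?_
    calc G.uf T c y
        = G.smul (G.cls T c) (G.smul {y} T) := by
          simp only [Hypergroup.uf, Hypergroup.cls, G.sA]
      _ = G.smul (G.smul (G.smul (G.smul (G.smul T {a}) T) {b}) T) (G.smul {y} T) := by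
          rw [e2]
      _ = G.smul (G.smul T {a}) (G.uf T b y) := by
          simp only [Hypergroup.uf, G.sA]
      _ = G.smul (G.smul T {a}) (G.uf T y b) := by rw [ub1 y]
      _ = G.smul (G.uf T a y) (G.smul {b} T) := by
          simp only [Hypergroup.uf, G.sA, G.smul_T_smul_T hT]
      _ = G.smul (G.uf T y a) (G.smul {b} T) := by rw [ua1 y]
      _ = G.smul (G.smul T (G.smul {y} T))
            (G.smul (G.smul (G.smul (G.smul T {a}) T) {b}) T) := by
          simp only [Hypergroup.uf, G.sA, G.smul_T_smul_T hT]
      _ = G.smul (G.smul T (G.smul {y} T)) (G.cls T c) := by rw [← e2]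
      _ = G.uf T y c := by
          simp only [Hypergroup.uf, Hypergroup.cls, G.sA, G.smul_T_smul_T hT]
  · refine G.uf_to_cond2 hT ?_
    refine le_antisymm ?_ (G.T_subset_TAT hT (G.one_mem_starTh hT c))
    have hcs : ({G.star c} : Set H) ⊆ G.smul (G.smul {G.star b} T) {G.star a} :=
      Set.singleton_subset_iff.2 (G.hmul_subset_pad hT (G.star b) (G.star a)
        (G.star_mem_hmul' hc))
    calc G.uf T (G.star c) c
        = G.smul (G.smul T (G.smul (G.smul {G.star c} T) {c})) T := rfl
      _ ⊆ G.smul (G.smul T (G.smul (G.smul (G.smul (G.smul {G.star b} T) {G.star a}) T)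
            (G.smul (G.smul {a} T) {b}))) T :=
          G.smul_mono' (G.smul_mono' le_rfl (G.smul_mono' (G.smul_mono' hcs le_rfl) hca)) le_rfl
      _ = G.smul (G.smul T (G.smul (G.smul {G.star b} T)
            (G.smul (G.smul (G.smul {G.star a} T) {a}) (G.smul T {b})))) T := by
          simp only [G.sA]
      _ ⊆ G.smul (G.smul T (G.smul (G.smul {G.star b} T)
            (G.smul T (G.smul T {b})))) T :=
          G.smul_mono' (G.smul_mono' le_rfl (G.smul_mono' le_rfl
            (G.smul_mono' conj_a le_rfl))) le_rfl
      _ = G.uf T (G.star b) b := by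
          simp only [Hypergroup.uf, G.sA, G.smul_T_smul_T hT]
      _ = T := G.cond2_to_uf hT b2

theorem ucClosed (n : ℕ) : G.IsClosed (G.upperCentral n) := by
  induction n with
  | zero =>
    refine ⟨⟨G.one, rfl⟩, ?_⟩
    intro x hx
    rw [Hypergroup.upperCentral] at hx ⊢
    rw [G.mem_smul'] at hx
    obtain ⟨u, hu, b, (rfl : b = G.one), hx⟩ := hx
    rw [G.mem_sstar'] at hu
    obtain ⟨o, (rfl : o = G.one), rfl⟩ := hu
    rw [G.star_one', G.hmul_one] at hx
    exact hx
  | succ n ih =>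
    refine ⟨⟨G.one, G.qcp_one ih⟩, ?_⟩
    intro x hx
    rw [G.mem_smul'] at hx
    obtain ⟨u, hu, b, hb, hx⟩ := hx
    rw [G.mem_sstar'] at hu
    obtain ⟨p, hp, rfl⟩ := hu
    exact G.qcp_mul ih (G.qcp_star ih hp) hb hx

theorem smulM3 {M : Set H} (hM : G.IsClosed M) :
    G.smul M (G.smul M (G.smul M M)) ⊆ M := by
  refine (G.smul_mono' le_rfl ((G.smul_mono' le_rfl (G.smul_self_subset hM)).trans
    (G.smul_self_subset hM))).trans (G.smul_self_subset hM)

theorem smulM3' {M : Set H} (hM : G.IsClosed M) :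
    G.smul (G.smul M (G.smul M M)) M ⊆ M := by
  refine (G.smul_mono' ((G.smul_mono' le_rfl (G.smul_self_subset hM)).trans
    (G.smul_self_subset hM)) le_rfl).trans (G.smul_self_subset hM)

theorem key_conjL {T M : Set H} (hT : G.IsClosed T) (hM : G.IsClosed M)
    (hTM : T ⊆ M) {z : H}
    (hc1 : ∀ y, G.cls T '' (G.smul (G.smul {z} T) {y}) =
      G.cls T '' (G.smul (G.smul {y} T) {z}))
    (hconj : G.smul (G.smul {G.star z} T) {z} ⊆ T) :
    G.smul (G.smul {G.star z} M) {z} ⊆ M := by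
  intro w hw
  rw [G.sA, G.mem_smul'] at hw
  obtain ⟨zs, (rfl : zs = G.star z), v, hv, hw⟩ := hw
  rw [G.mem_smul'] at hv
  obtain ⟨m, hm, z', hz', hv⟩ := hv
  rw [show z' = z from hz'] at hv
  -- v ∈ m z; find x ∈ z T m with cls T v = cls T x
  have hvB : v ∈ G.smul (G.smul {m} T) {z} := G.hmul_subset_pad hT m z hv
  have himg : G.cls T v ∈ G.cls T '' (G.smul (G.smul {z} T) {m}) := by
    rw [hc1 m]
    exact Set.mem_image_of_mem _ hvB
  obtain ⟨x, hx, hxv⟩ := himg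
  have hvx : v ∈ G.cls T x := hxv ▸ G.mem_cls_self hT v
  -- w ∈ z* v ⊆ z* (cls T x) ⊆ (z* T z) T m T ⊆ M
  have hw1 : w ∈ G.smul {G.star z} (G.cls T x) :=
    G.hmul_mem_smul rfl hvx hw
  have hw2 : w ∈ G.smul {G.star z}
      (G.smul (G.smul T (G.smul (G.smul {z} T) {m})) T) :=
    G.smul_mono' le_rfl (G.cls_subset_of_mem hx) hw1
  have he : G.smul {G.star z} (G.smul (G.smul T (G.smul (G.smul {z} T) {m})) T) =
      G.smul (G.smul (G.smul {G.star z} T) {z}) (G.smul T (G.smul {m} T)) := by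
    simp only [G.sA]
  rw [he] at hw2
  have hsub : G.smul (G.smul (G.smul {G.star z} T) {z}) (G.smul T (G.smul {m} T)) ⊆
      G.smul M (G.smul M (G.smul M M)) :=
    G.smul_mono' (hconj.trans hTM) (G.smul_mono' hTM
      (G.smul_mono' (Set.singleton_subset_iff.2 hm) hTM))
  exact G.smulM3 hM (hsub hw2)

theorem key_conjR {T M : Set H} (hT : G.IsClosed T) (hM : G.IsClosed M)
    (hTM : T ⊆ M) {z : H}
    (hc1 : ∀ y, G.cls T '' (G.smul (G.smul {z} T) {y}) =
      G.cls T '' (G.smul (G.smul {y} T) {z}))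
    (hconj : G.smul (G.smul {z} T) {G.star z} ⊆ T) :
    G.smul (G.smul {z} M) {G.star z} ⊆ M := by
  intro w hw
  rw [G.mem_smul'] at hw
  obtain ⟨u, hu, zs, (rfl : zs = G.star z), hw⟩ := hw
  rw [G.mem_smul'] at hu
  obtain ⟨z', hz', m, hm, hu⟩ := hu
  rw [show z' = z from hz'] at hu
  -- u ∈ z m; find x ∈ m T z with cls T u = cls T x
  have huB : u ∈ G.smul (G.smul {z} T) {m} := G.hmul_subset_pad hT z m hu
  have himg : G.cls T u ∈ G.cls T '' (G.smul (G.smul {m} T) {z}) := by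
    rw [← hc1 m]
    exact Set.mem_image_of_mem _ huB
  obtain ⟨x, hx, hxu⟩ := himg
  have hux : u ∈ G.cls T x := hxu ▸ G.mem_cls_self hT u
  have hw1 : w ∈ G.smul (G.cls T x) {G.star z} := G.hmul_mem_smul hux rfl hw
  have hw2 : w ∈ G.smul (G.smul (G.smul T (G.smul (G.smul {m} T) {z})) T) {G.star z} :=
    G.smul_mono' (G.cls_subset_of_mem hx) le_rfl hw1
  have he : G.smul (G.smul (G.smul T (G.smul (G.smul {m} T) {z})) T) {G.star z} =
      G.smul (G.smul T (G.smul {m} T)) (G.smul (G.smul {z} T) {G.star z}) := by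
    simp only [G.sA]
  rw [he] at hw2
  have hsub : G.smul (G.smul T (G.smul {m} T)) (G.smul (G.smul {z} T) {G.star z}) ⊆
      G.smul (G.smul M (G.smul M M)) M :=
    G.smul_mono' (G.smul_mono' hTM
      (G.smul_mono' (Set.singleton_subset_iff.2 hm) hTM)) (hconj.trans hTM)
  exact G.smulM3' hM (hsub hw2)
end Hypergroup

/-- in a finite weakly nilpotent hypergroup, every maximal
closed subset is strongly normal. -/
theorem maximal_stronglyNormal {H : Type*} [Finite H] (G : Hypergroup H)
    (hG : G.WeaklyNilpotent) (M : Set H) (hM : G.IsClosed M)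
    (hMne : M ≠ Set.univ)
    (hmax : ∀ K : Set H, G.IsClosed K → M ⊆ K → K ≠ Set.univ → M = K) :
    G.IsStronglyNormalIn M Set.univ := by
  classical
  obtain ⟨n, hn⟩ := hG
  have h1M : G.one ∈ M := G.one_mem_closed hM
  have hex : ∃ i, ¬ (G.upperCentral i ⊆ M) := by
    refine ⟨n, ?_⟩
    rw [hn]
    intro h
    exact hMne (le_antisymm (Set.subset_univ M) h)
  have hjspec := Nat.find_spec hex
  have hj0 : Nat.find hex ≠ 0 := by
    intro h0
    rw [h0] at hjspec
    refine hjspec ?_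
    intro x hx
    simp only [Hypergroup.upperCentral] at hx
    exact hx ▸ h1M
  obtain ⟨i, hi⟩ := Nat.exists_eq_succ_of_ne_zero hj0
  have hTsub : G.upperCentral i ⊆ M :=
    not_not.mp (Nat.find_min hex (by rw [hi]; exact Nat.lt_succ_self i))
  rw [hi] at hjspec
  obtain ⟨z, hzZ, hzM⟩ := Set.not_subset.mp hjspec
  have hT : G.IsClosed (G.upperCentral i) := G.ucClosed i
  set T := G.upperCentral i with hTdef
  have hz : z ∈ G.qCenterPre T := hzZ
  obtain ⟨z1, z2⟩ := hz
  -- conjugates of T by z land in T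
  have conjL : G.smul (G.smul {G.star z} T) {z} ⊆ T := G.thin_extract hT z2
  have conjR : G.smul (G.smul {z} T) {G.star z} ⊆ T := by
    refine G.thin_extract hT ?_
    rw [z1 (G.star z)]
    exact z2
  -- the (strong) normalizer of M
  set N : Set H := {h | G.smul (G.smul {G.star h} M) {h} ⊆ M ∧
      G.smul (G.smul {h} M) {G.star h} ⊆ M} with hNdef
  have hMN : M ⊆ N := by
    intro m hm
    have hmm : ({m} : Set H) ⊆ M := Set.singleton_subset_iff.2 hm
    have hms : ({G.star m} : Set H) ⊆ M :=
      Set.singleton_subset_iff.2 (G.star_mem_closed hM hm)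
    constructor
    · exact (G.smul_mono' (G.smul_mono' hms le_rfl) hmm).trans
        ((G.smul_mono' (G.smul_self_subset hM) le_rfl).trans (G.smul_self_subset hM))
    · exact (G.smul_mono' (G.smul_mono' hmm le_rfl) hms).trans
        ((G.smul_mono' (G.smul_self_subset hM) le_rfl).trans (G.smul_self_subset hM))
  have hNclosed : G.IsClosed N := by
    refine ⟨⟨G.one, hMN h1M⟩, ?_⟩
    intro x hx
    rw [G.mem_smul'] at hx
    obtain ⟨u, hu, b, hb, hx⟩ := hx
    rw [G.mem_sstar'] at hu
    obtain ⟨a, ha, rfl⟩ := hu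
    -- x ∈ (star a) b with a b ∈ N
    have hxs : G.star x ∈ G.hmul (G.star b) a := by
      have := G.star_mem_hmul' hx
      rwa [G.star_star'] at this
    have hxsub : ({x} : Set H) ⊆ G.smul {G.star a} {b} := by
      rw [G.smul_singleton']
      exact Set.singleton_subset_iff.2 hx
    have hxssub : ({G.star x} : Set H) ⊆ G.smul {G.star b} {a} := by
      rw [G.smul_singleton']
      exact Set.singleton_subset_iff.2 hxs
    constructor
    · calc G.smul (G.smul {G.star x} M) {x}
          ⊆ G.smul (G.smul (G.smul {G.star b} {a}) M) (G.smul {G.star a} {b}) :=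
            G.smul_mono' (G.smul_mono' hxssub le_rfl) hxsub
        _ = G.smul (G.smul {G.star b} (G.smul (G.smul {a} M) {G.star a})) {b} := by
            simp only [G.sA]
        _ ⊆ G.smul (G.smul {G.star b} M) {b} :=
            G.smul_mono' (G.smul_mono' le_rfl ha.2) le_rfl
        _ ⊆ M := hb.1
    · calc G.smul (G.smul {x} M) {G.star x}
          ⊆ G.smul (G.smul (G.smul {G.star a} {b}) M) (G.smul {G.star b} {a}) :=
            G.smul_mono' (G.smul_mono' hxsub le_rfl) hxssub
        _ = G.smul (G.smul {G.star a} (G.smul (G.smul {b} M) {G.star b})) {a} := by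
            simp only [G.sA]
        _ ⊆ G.smul (G.smul {G.star a} M) {a} :=
            G.smul_mono' (G.smul_mono' le_rfl hb.2) le_rfl
        _ ⊆ M := ha.1
  have hzN : z ∈ N :=
    ⟨G.key_conjL hT hM hTsub z1 conjL, G.key_conjR hT hM hTsub z1 conjR⟩
  have hNuniv : N = Set.univ := by
    by_contra hne
    exact hzM ((hmax N hNclosed hMN hne) ▸ hzN)
  intro k _
  have hk : k ∈ N := hNuniv ▸ Set.mem_univ k
  exact hk.1
end

section
/- Every closed subset of a finite weakly nilpotent hypergroup H is strongly subnormal in H: there is a chain of closed subsets F = F₀ ⊆ F₁ ⊆ ⋯ ⊆ Fₙ = H with each Fᵢ₋₁ strongly normal in Fᵢ. -/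
namespace Hypergroup

variable {H : Type*} {G : Hypergroup H}

namespace Aux

lemma mem_smul {A B : Set H} {x : H} :
    x ∈ G.smul A B ↔ ∃ a ∈ A, ∃ b ∈ B, x ∈ G.hmul a b := by
  simp [Hypergroup.smul]

lemma smul_mono {A A' B B' : Set H} (hA : A ⊆ A') (hB : B ⊆ B') :
    G.smul A B ⊆ G.smul A' B' := by
  intro x hx
  rcases mem_smul.1 hx with ⟨a, ha, b, hb, h⟩
  exact mem_smul.2 ⟨a, hA ha, b, hB hb, h⟩

lemma smul_singleton {a b : H} : G.smul {a} {b} = G.hmul a b := by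
  simp [Hypergroup.smul]

lemma star_one : G.star G.one = G.one := by
  have h1 : G.one ∈ G.hmul G.one G.one := by rw [G.hmul_one]; rfl
  have := G.inv_left _ _ _ h1
  rw [G.hmul_one] at this
  exact this.symm

lemma one_mem_star_mul (s : H) : G.one ∈ G.hmul (G.star s) s := by
  have h1 : s ∈ G.hmul s G.one := by rw [G.hmul_one]; rfl
  exact G.inv_left _ _ _ h1

lemma star_star (s : H) : G.star (G.star s) = s := by
  have := G.inv_left _ _ _ (one_mem_star_mul (G := G) s)
  rw [G.hmul_one] at this
  exact this.symm

lemma one_mem_mul_star (s : H) : G.one ∈ G.hmul s (G.star s) := by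
  have := one_mem_star_mul (G := G) (G.star s)
  rwa [star_star] at this

lemma one_hmul (s : H) : G.hmul G.one s = {s} := by
  ext r
  constructor
  · intro hr
    have h2 := G.inv_right _ _ _ hr
    have h3 := G.inv_left _ _ _ h2
    rw [G.hmul_one] at h3
    have : G.star s = G.star r := h3
    have := congrArg G.star this
    rw [star_star, star_star] at this
    simpa using this.symm
  · intro hr
    rcases hr with rfl
    have := G.inv_right _ _ _ (one_mem_star_mul (G := G) (G.star r))
    simpa only [star_star] using this

lemma hmul_nonempty (p q : H) : (G.hmul p q).Nonempty := by
  have h : G.one ∈ G.hmul q (G.star q) := one_mem_mul_star q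
  have := (G.assoc p q (G.star q))
  have hp : p ∈ ⋃ x ∈ G.hmul q (G.star q), G.hmul p x := by
    refine Set.mem_biUnion h ?_
    rw [G.hmul_one]; rfl
  rw [this] at hp
  rcases Set.mem_iUnion₂.1 hp with ⟨x, hx, _⟩
  exact ⟨x, hx⟩

lemma star_rev {p q r : H} (h : r ∈ G.hmul p q) :
    G.star r ∈ G.hmul (G.star q) (G.star p) := by
  have h1 := G.inv_left _ _ _ h
  have h2 := G.inv_right _ _ _ h1
  exact G.inv_left _ _ _ h2

lemma smul_assoc (A B C : Set H) :
    G.smul (G.smul A B) C = G.smul A (G.smul B C) := by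
  ext x
  simp only [mem_smul]
  constructor
  · rintro ⟨w, ⟨a, ha, b, hb, hw⟩, c, hc, hx⟩
    have key := G.assoc a b c
    have : x ∈ ⋃ y ∈ G.hmul a b, G.hmul y c := Set.mem_biUnion hw hx
    rw [← key] at this
    rcases Set.mem_iUnion₂.1 this with ⟨y, hy, hxy⟩
    exact ⟨a, ha, y, ⟨b, hb, c, hc, hy⟩, hxy⟩
  · rintro ⟨a, ha, w, ⟨b, hb, c, hc, hw⟩, hx⟩
    have key := G.assoc a b c
    have : x ∈ ⋃ y ∈ G.hmul b c, G.hmul a y := Set.mem_biUnion hw hx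
    rw [key] at this
    rcases Set.mem_iUnion₂.1 this with ⟨y, hy, hxy⟩
    exact ⟨y, ⟨a, ha, b, hb, hy⟩, c, hc, hxy⟩

lemma one_smul (A : Set H) : G.smul {G.one} A = A := by
  ext x
  simp only [mem_smul, Set.mem_singleton_iff]
  constructor
  · rintro ⟨a, rfl, b, hb, hx⟩
    rw [one_hmul] at hx
    rcases hx with rfl; exact hb
  · intro hx
    exact ⟨_, rfl, x, hx, by rw [one_hmul]; rfl⟩

lemma smul_one (A : Set H) : G.smul A {G.one} = A := by
  ext x
  simp only [mem_smul, Set.mem_singleton_iff]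
  constructor
  · rintro ⟨a, ha, b, rfl, hx⟩
    rw [G.hmul_one] at hx
    rcases hx with rfl; exact ha
  · intro hx
    exact ⟨x, hx, _, rfl, by rw [G.hmul_one]; rfl⟩

lemma sstar_smul (A B : Set H) :
    G.sstar (G.smul A B) = G.smul (G.sstar B) (G.sstar A) := by
  ext x
  simp only [Hypergroup.sstar, Set.mem_image, mem_smul]
  constructor
  · rintro ⟨y, ⟨a, ha, b, hb, hy⟩, rfl⟩
    exact ⟨_, ⟨b, hb, rfl⟩, _, ⟨a, ha, rfl⟩, star_rev hy⟩
  · rintro ⟨b', ⟨b, hb, rfl⟩, a', ⟨a, ha, rfl⟩, hx⟩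
    refine ⟨G.star x, ⟨a, ha, b, hb, ?_⟩, star_star x⟩
    have := star_rev hx
    rwa [star_star, star_star] at this

lemma sstar_singleton (a : H) : G.sstar {a} = {G.star a} := by
  simp [Hypergroup.sstar]

lemma sstar_mono {A B : Set H} (h : A ⊆ B) : G.sstar A ⊆ G.sstar B :=
  Set.image_mono h

lemma mem_sstar {A : Set H} {x : H} : x ∈ G.sstar A ↔ G.star x ∈ A := by
  constructor
  · rintro ⟨a, ha, rfl⟩; rwa [star_star]
  · intro h; exact ⟨G.star x, h, star_star x⟩

section ClosedSub
variable {F : Set H} (hF : G.IsClosed F)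
include hF

lemma one_mem : G.one ∈ F := by
  rcases hF.1 with ⟨f, hf⟩
  exact hF.2 (mem_smul.2 ⟨G.star f, ⟨f, hf, rfl⟩, f, hf, one_mem_star_mul f⟩)

lemma star_mem {f : H} (hf : f ∈ F) : G.star f ∈ F := by
  refine hF.2 (mem_smul.2 ⟨G.star f, ⟨f, hf, rfl⟩, G.one, one_mem hF, ?_⟩)
  rw [G.hmul_one]; rfl

lemma sstar_closed : G.sstar F = F := by
  apply Set.Subset.antisymm
  · rintro x ⟨f, hf, rfl⟩; exact star_mem hF hf
  · intro f hf
    exact ⟨G.star f, star_mem hF hf, star_star f⟩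

lemma smul_self : G.smul F F = F := by
  apply Set.Subset.antisymm
  · have := hF.2; rwa [sstar_closed hF] at this
  · intro f hf
    exact mem_smul.2 ⟨G.one, one_mem hF, f, hf, by rw [one_hmul]; rfl⟩

lemma smul_self' (X : Set H) : G.smul F (G.smul F X) = G.smul F X := by
  rw [← smul_assoc, smul_self hF]

lemma subset_smul_right (A : Set H) : A ⊆ G.smul A F := by
  intro a ha
  exact mem_smul.2 ⟨a, ha, G.one, one_mem hF, by rw [G.hmul_one]; rfl⟩

lemma subset_smul_left (A : Set H) : A ⊆ G.smul F A := by
  intro a ha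
  exact mem_smul.2 ⟨G.one, one_mem hF, a, ha, by rw [one_hmul]; rfl⟩

end ClosedSub

-- ### canonical sandwich products
def q1 (G : Hypergroup H) (T : Set H) (a : H) : Set H := G.smul T (G.smul {a} T)

def q2 (G : Hypergroup H) (T : Set H) (a b : H) : Set H :=
  G.smul T (G.smul {a} (G.smul T (G.smul {b} T)))

def PZ (G : Hypergroup H) (T : Set H) : Set H :=
  {h | (∀ y, q2 G T h y = q2 G T y h) ∧ q2 G T (G.star h) h = T}

section PZlemmas

variable {T : Set H} (hT : G.IsClosed T)

lemma cls_eq_q1 (a : H) : G.cls T a = q1 G T a := by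
  rw [Hypergroup.cls, q1, smul_assoc]

include hT

lemma mem_q1_self (a : H) : a ∈ q1 G T a := by
  apply subset_smul_left hT
  apply subset_smul_right hT
  rfl

lemma hmul_subset_q2 (a b : H) : G.hmul a b ⊆ q2 G T a b := by
  rw [q2]
  refine Set.Subset.trans ?_ (subset_smul_left hT _)
  rw [← smul_singleton (G := G) (a := a) (b := b)]
  exact smul_mono (Set.Subset.refl _)
    (Set.singleton_subset_iff.2 (mem_q1_self hT b))

lemma q1_eq_of_mem {t : H} (ht : t ∈ T) : q1 G T t = T := by
  apply Set.Subset.antisymm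
  · calc q1 G T t ⊆ G.smul T (G.smul T T) :=
          smul_mono (Set.Subset.refl _) (smul_mono (by simpa using ht) (Set.Subset.refl _))
    _ = T := by rw [smul_self hT, smul_self hT]
  · intro s hs
    rcases hmul_nonempty (G := G) s (G.star t) with ⟨a, ha⟩
    have hst : s ∈ G.hmul a t := by
      have := G.inv_right _ _ _ ha
      rwa [star_star] at this
    have haT : a ∈ T := by
      have : a ∈ G.smul T T :=
        mem_smul.2 ⟨s, hs, G.star t, star_mem hT ht, ha⟩
      rwa [smul_self hT] at this
    exact mem_smul.2 ⟨a, haT, t, subset_smul_right hT _ rfl, hst⟩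

lemma sstar_q2 (a b : H) :
    G.sstar (q2 G T a b) = q2 G T (G.star b) (G.star a) := by
  simp only [q2, sstar_smul, sstar_singleton, sstar_closed hT, smul_assoc]

lemma one_mem_PZ : G.one ∈ PZ G T := by
  constructor
  · intro y
    simp only [q2, one_smul, smul_self' hT, smul_self hT]
  · simp only [star_one, q2, one_smul, smul_self' hT, smul_self hT]

lemma T_subset_PZ : T ⊆ PZ G T := by
  intro t ht
  constructor
  · intro y
    have e1 : q2 G T t y = G.smul (q1 G T t) (G.smul {y} T) := by
      simp only [q2, q1, smul_assoc]
    have e2 : q2 G T y t = G.smul T (G.smul {y} (q1 G T t)) := by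
      simp only [q2, q1, smul_assoc]
    rw [e1, e2, q1_eq_of_mem hT ht]
  · have e1 : q2 G T (G.star t) t = G.smul (q1 G T (G.star t)) (G.smul {t} T) := by
      simp only [q2, q1, smul_assoc]
    rw [e1, q1_eq_of_mem hT (star_mem hT ht)]
    exact q1_eq_of_mem hT ht

lemma star_mem_PZ {h : H} (hh : h ∈ PZ G T) : G.star h ∈ PZ G T := by
  have comm : ∀ y, q2 G T (G.star h) y = q2 G T y (G.star h) := by
    intro y
    have h2 := congrArg G.sstar (hh.1 (G.star y))
    simp only [sstar_q2 hT, star_star] at h2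
    exact h2.symm
  refine ⟨comm, ?_⟩
  rw [star_star, ← comm h]
  exact hh.2

lemma q1_mul_eq {h g x : H} (hg : g ∈ PZ G T)
    (hx : x ∈ G.hmul h g) : q1 G T x = q2 G T h g := by
  apply Set.Subset.antisymm
  · calc q1 G T x ⊆ G.smul T (G.smul (G.hmul h g) T) :=
          smul_mono (Set.Subset.refl _) (smul_mono (by simpa using hx) (Set.Subset.refl _))
    _ = G.smul T (G.smul {h} (G.smul {g} T)) := by
          rw [← smul_singleton (G := G) (a := h) (b := g), smul_assoc]
    _ ⊆ q2 G T h g := by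
          rw [q2]
          refine smul_mono (Set.Subset.refl _) (smul_mono (Set.Subset.refl _) ?_)
          exact subset_smul_left hT _
  · have hhx : h ∈ G.hmul x (G.star g) := G.inv_right _ _ _ hx
    calc q2 G T h g ⊆
        G.smul T (G.smul (G.hmul x (G.star g)) (G.smul T (G.smul {g} T))) := by
          rw [q2]
          exact smul_mono (Set.Subset.refl _)
            (smul_mono (by simpa using hhx) (Set.Subset.refl _))
    _ = G.smul T (G.smul {x} (G.smul {G.star g} (G.smul T (G.smul {g} T)))) := by
          rw [← smul_singleton (G := G) (a := x) (b := G.star g), smul_assoc]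
    _ ⊆ G.smul T (G.smul {x} (q2 G T (G.star g) g)) := by
          refine smul_mono (Set.Subset.refl _) (smul_mono (Set.Subset.refl _) ?_)
          rw [q2]
          exact subset_smul_left hT _
    _ = q1 G T x := by rw [hg.2, q1]

lemma mul_mem_PZ {h g x : H} (hh : h ∈ PZ G T) (hg : g ∈ PZ G T)
    (hx : x ∈ G.hmul h g) : x ∈ PZ G T := by
  have hcls : q1 G T x = q2 G T h g := q1_mul_eq hT hg hx
  have hxs : G.star x ∈ G.hmul (G.star g) (G.star h) := star_rev hx
  have hclss : q1 G T (G.star x) = q2 G T (G.star g) (G.star h) :=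
    q1_mul_eq hT (star_mem_PZ hT hh) hxs
  constructor
  · intro y
    calc q2 G T x y
        = G.smul (q1 G T x) (G.smul {y} T) := by simp only [q2, q1, smul_assoc]
    _ = G.smul (q2 G T h g) (G.smul {y} T) := by rw [hcls]
    _ = G.smul T (G.smul {h} (q2 G T g y)) := by simp only [q2, smul_assoc]
    _ = G.smul T (G.smul {h} (q2 G T y g)) := by rw [hg.1 y]
    _ = G.smul (q2 G T h y) (G.smul {g} T) := by simp only [q2, smul_assoc]
    _ = G.smul (q2 G T y h) (G.smul {g} T) := by rw [hh.1 y]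
    _ = G.smul T (G.smul {y} (q2 G T h g)) := by simp only [q2, smul_assoc]
    _ = G.smul T (G.smul {y} (q1 G T x)) := by rw [hcls]
    _ = q2 G T y x := by simp only [q2, q1, smul_assoc]
  · calc q2 G T (G.star x) x
        = G.smul (q1 G T (G.star x)) (G.smul {x} T) := by simp only [q2, q1, smul_assoc]
    _ = G.smul (q2 G T (G.star g) (G.star h)) (G.smul {x} T) := by rw [hclss]
    _ = G.smul T (G.smul {G.star g} (G.smul T (G.smul {G.star h} (q1 G T x)))) := by
          simp only [q2, q1, smul_assoc]
    _ = G.smul T (G.smul {G.star g} (G.smul T (G.smul {G.star h} (q2 G T h g)))) := by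
          rw [hcls]
    _ = G.smul T (G.smul {G.star g} (G.smul (q2 G T (G.star h) h) (G.smul {g} T))) := by
          simp only [q2, smul_assoc]
    _ = G.smul T (G.smul {G.star g} (G.smul T (G.smul {g} T))) := by rw [hh.2]
    _ = T := hg.2

lemma PZ_closed : G.IsClosed (PZ G T) := by
  refine ⟨⟨G.one, one_mem_PZ hT⟩, ?_⟩
  intro x hx
  rcases mem_smul.1 hx with ⟨a, ha, g, hg, hxm⟩
  have ha' : G.star a ∈ PZ G T := mem_sstar.1 ha
  have haPZ : a ∈ PZ G T := by
    have := star_mem_PZ hT ha'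
    rwa [star_star] at this
  exact mul_mem_PZ hT haPZ hg hxm

end PZlemmas


section Bridge

variable {T : Set H} (hT : G.IsClosed T)

include hT

lemma q1_absorb_left (a : H) : G.smul T (q1 G T a) = q1 G T a := by
  rw [q1, smul_self' hT]

lemma q1_absorb_right (a : H) : G.smul (q1 G T a) T = q1 G T a := by
  simp only [q1, smul_assoc, smul_self hT]

lemma q1_le_of_mem {a b : H} (hab : a ∈ q1 G T b) : q1 G T a ⊆ q1 G T b := by
  calc q1 G T a ⊆ G.smul T (G.smul (q1 G T b) T) :=
        smul_mono (Set.Subset.refl _)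
          (smul_mono (Set.singleton_subset_iff.2 hab) (Set.Subset.refl _))
  _ = q1 G T b := by rw [q1_absorb_right hT, q1_absorb_left hT]

lemma mem_q1_symm {a b : H} (hab : a ∈ q1 G T b) : b ∈ q1 G T a := by
  rcases mem_smul.1 hab with ⟨p, hp, w, hw, haw⟩
  rcases mem_smul.1 hw with ⟨b', hb', t, ht, hwb⟩
  rcases hb' with rfl
  have hw2 : w ∈ G.hmul (G.star p) a := G.inv_left _ _ _ haw
  have hb2 : b' ∈ G.hmul w (G.star t) := G.inv_right _ _ _ hwb
  have : b' ∈ G.smul (G.smul {G.star p} {a}) {G.star t} :=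
    mem_smul.2 ⟨w, mem_smul.2 ⟨G.star p, rfl, a, rfl, hw2⟩, G.star t, rfl, hb2⟩
  have hsub : G.smul (G.smul {G.star p} {a}) {G.star t} ⊆ q1 G T a := by
    rw [smul_assoc, q1]
    exact smul_mono (Set.singleton_subset_iff.2 (star_mem hT hp))
      (smul_mono (Set.Subset.refl _) (Set.singleton_subset_iff.2 (star_mem hT ht)))
  exact hsub this

lemma q1_eq_of_mem_q1 {a b : H} (hab : a ∈ q1 G T b) : q1 G T a = q1 G T b :=
  Set.Subset.antisymm (q1_le_of_mem hT hab) (q1_le_of_mem hT (mem_q1_symm hT hab))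

omit hT

lemma sandwich_eq (S : Set H) :
    G.smul T (G.smul S T) = ⋃ a ∈ S, q1 G T a := by
  ext x
  constructor
  · intro hx
    rcases mem_smul.1 hx with ⟨p, hp, w, hw, hxw⟩
    rcases mem_smul.1 hw with ⟨a, ha, t, ht, hwa⟩
    exact Set.mem_biUnion ha
      (mem_smul.2 ⟨p, hp, w, mem_smul.2 ⟨a, rfl, t, ht, hwa⟩, hxw⟩)
  · intro hx
    rcases Set.mem_iUnion₂.1 hx with ⟨a, ha, hxa⟩
    rcases mem_smul.1 hxa with ⟨p, hp, w, hw, hxw⟩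
    rcases mem_smul.1 hw with ⟨a', ha', t, ht, hwa⟩
    rcases ha' with rfl
    exact mem_smul.2 ⟨p, hp, w, mem_smul.2 ⟨a', ha, t, ht, hwa⟩, hxw⟩

lemma sandwich_eq_sUnion (S : Set H) :
    G.smul T (G.smul S T) = ⋃₀ (G.cls T '' S) := by
  rw [Set.sUnion_image, sandwich_eq]
  exact Set.iUnion₂_congr fun a _ => (cls_eq_q1 a).symm

include hT

lemma cls_img_eq_iff (S S' : Set H) :
    G.cls T '' S = G.cls T '' S' ↔
      G.smul T (G.smul S T) = G.smul T (G.smul S' T) := by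
  constructor
  · intro h
    rw [sandwich_eq_sUnion, sandwich_eq_sUnion, h]
  · intro h
    have key : ∀ S₁ S₂ : Set H,
        G.smul T (G.smul S₁ T) = G.smul T (G.smul S₂ T) →
        G.cls T '' S₁ ⊆ G.cls T '' S₂ := by
      intro S₁ S₂ hS
      rintro c ⟨a, ha, rfl⟩
      have haS : a ∈ G.smul T (G.smul S₂ T) := by
        rw [← hS, sandwich_eq]
        exact Set.mem_biUnion ha (mem_q1_self hT a)
      rw [sandwich_eq] at haS
      rcases Set.mem_iUnion₂.1 haS with ⟨b, hb, hab⟩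
      exact ⟨b, hb, by rw [cls_eq_q1, cls_eq_q1, q1_eq_of_mem_q1 hT hab]⟩
    exact Set.Subset.antisymm (key _ _ h) (key _ _ h.symm)

lemma thin_img_iff (h : H) :
    G.cls T '' (G.smul (G.smul {G.star h} T) {h}) = {T} ↔
      q2 G T (G.star h) h = T := by
  have hsand : G.smul T (G.smul (G.smul (G.smul {G.star h} T) {h}) T)
      = q2 G T (G.star h) h := by
    simp only [q2, smul_assoc]
  constructor
  · intro himg
    rw [← hsand, sandwich_eq_sUnion, himg]
    simp
  · intro hq
    have hne : (G.smul (G.smul {G.star h} T) {h}).Nonempty := by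
      rcases hmul_nonempty (G := G) (G.star h) h with ⟨u, hu⟩
      refine ⟨u, mem_smul.2 ⟨G.star h, ?_, h, rfl, hu⟩⟩
      exact subset_smul_right hT _ rfl
    apply Set.Subset.antisymm
    · rintro c ⟨a, ha, rfl⟩
      have haT : a ∈ T := by
        have : a ∈ G.smul T (G.smul (G.smul (G.smul {G.star h} T) {h}) T) := by
          rw [sandwich_eq]
          exact Set.mem_biUnion ha (mem_q1_self hT a)
        rw [hsand, hq] at this
        exact this
      simp only [Set.mem_singleton_iff, cls_eq_q1]
      exact q1_eq_of_mem hT haT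
    · rintro c hc
      have hc' : c = T := hc
      rcases hne with ⟨a, ha⟩
      refine ⟨a, ha, ?_⟩
      have haT : a ∈ T := by
        have : a ∈ G.smul T (G.smul (G.smul (G.smul {G.star h} T) {h}) T) := by
          rw [sandwich_eq]
          exact Set.mem_biUnion ha (mem_q1_self hT a)
        rw [hsand, hq] at this
        exact this
      rw [hc', cls_eq_q1, q1_eq_of_mem hT haT]

lemma qCenterPre_eq : G.qCenterPre T = PZ G T := by
  ext h
  unfold Hypergroup.qCenterPre PZ
  simp only [Set.mem_setOf_eq]
  constructor
  · rintro ⟨hc, ht⟩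
    refine ⟨fun y => ?_, (thin_img_iff hT h).1 ht⟩
    have := (cls_img_eq_iff hT _ _).1 (hc y)
    simpa only [q2, smul_assoc] using this
  · rintro ⟨hc, ht⟩
    refine ⟨fun y => ?_, (thin_img_iff hT h).2 ht⟩
    apply (cls_img_eq_iff hT _ _).2
    simpa only [q2, smul_assoc] using hc y

end Bridge

section Chain

lemma Z_closed : ∀ i : ℕ, G.IsClosed (G.upperCentral i)
  | 0 => by
    refine ⟨⟨G.one, rfl⟩, ?_⟩
    show G.smul (G.sstar {G.one}) {G.one} ⊆ {G.one}
    rw [sstar_singleton, star_one, smul_singleton, one_hmul]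
  | (i + 1) => by
    show G.IsClosed (G.qCenterPre (G.upperCentral i))
    rw [qCenterPre_eq (Z_closed i)]
    exact PZ_closed (Z_closed i)

lemma Z_mono (i : ℕ) : G.upperCentral i ⊆ G.upperCentral (i + 1) := by
  show G.upperCentral i ⊆ G.qCenterPre (G.upperCentral i)
  rw [qCenterPre_eq (Z_closed i)]
  exact T_subset_PZ (Z_closed i)

lemma Z_succ_PZ (i : ℕ) :
    G.upperCentral (i + 1) = PZ G (G.upperCentral i) :=
  qCenterPre_eq (Z_closed i)

lemma q1_sub_Zsucc (i : ℕ) {t : H} (ht : t ∈ G.upperCentral (i + 1)) :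
    q1 G (G.upperCentral i) t ⊆ G.upperCentral (i + 1) := by
  set Zs := G.upperCentral (i + 1) with hZs
  have hsub : G.upperCentral i ⊆ Zs := Z_mono i
  calc q1 G (G.upperCentral i) t ⊆ G.smul Zs (G.smul Zs Zs) :=
        smul_mono hsub (smul_mono (Set.singleton_subset_iff.2 ht) hsub)
  _ = Zs := by rw [smul_self (Z_closed (i+1)), smul_self (Z_closed (i+1))]

lemma conj_sub_T {T : Set H} (hT : G.IsClosed T) {z : H} (hz : z ∈ PZ G T) :
    G.smul {G.star z} (G.smul T {z}) ⊆ T := by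
  intro x hx
  rcases mem_smul.1 hx with ⟨a, ha, w, hw, hxw⟩
  have ha' : a = G.star z := ha
  rcases mem_smul.1 hw with ⟨t, ht, b, hb, hwt⟩
  have hb' : b = z := hb
  rw [hb'] at hwt
  rw [ha'] at hxw
  have hw2 : w ∈ G.smul T (G.smul {z} T) :=
    mem_smul.2 ⟨t, ht, z, subset_smul_right hT {z} rfl, hwt⟩
  have hx2 : x ∈ G.smul {G.star z} (G.smul T (G.smul {z} T)) :=
    mem_smul.2 ⟨G.star z, rfl, w, hw2, hxw⟩
  have hx3 : x ∈ q2 G T (G.star z) z := by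
    rw [q2]
    exact subset_smul_left hT _ hx2
  rwa [hz.2] at hx3

lemma zstar_F_sub {T : Set H} (hT : G.IsClosed T) {z : H} (hz : z ∈ PZ G T)
    (F : Set H) :
    G.smul {G.star z} F ⊆ G.smul T (G.smul F (G.smul T (G.smul {G.star z} T))) := by
  intro x hx
  rcases mem_smul.1 hx with ⟨a, ha, f', hf', hxm⟩
  have ha' : a = G.star z := ha
  rw [ha'] at hxm
  have h1 : x ∈ q2 G T (G.star z) f' := hmul_subset_q2 hT _ _ hxm
  rw [(star_mem_PZ hT hz).1 f'] at h1
  have hsub : q2 G T f' (G.star z) ⊆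
      G.smul T (G.smul F (G.smul T (G.smul {G.star z} T))) := by
    rw [q2]
    exact smul_mono (Set.Subset.refl _)
      (smul_mono (Set.singleton_subset_iff.2 hf') (Set.Subset.refl _))
  exact hsub h1

lemma strong_core {T F : Set H} (hT : G.IsClosed T) (hF : G.IsClosed F)
    (hswap : G.smul T F ⊆ G.smul F T) {f z k : H} (hf : f ∈ F) (hz' : z ∈ PZ G T)
    (hkm : k ∈ G.hmul f z) :
    G.smul (G.smul {G.star k} (G.smul F T)) {k} ⊆ G.smul F T := by
  have hks : G.star k ∈ G.hmul (G.star z) (G.star f) := star_rev hkm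
  calc G.smul (G.smul {G.star k} (G.smul F T)) {k}
      ⊆ G.smul (G.smul (G.hmul (G.star z) (G.star f)) (G.smul F T)) (G.hmul f z) :=
        smul_mono (smul_mono (Set.singleton_subset_iff.2 hks) (Set.Subset.refl _))
          (Set.singleton_subset_iff.2 hkm)
  _ = G.smul {G.star z} (G.smul {G.star f} (G.smul F (G.smul T (G.smul {f} {z})))) := by
        rw [← smul_singleton (G := G) (a := G.star z) (b := G.star f),
          ← smul_singleton (G := G) (a := f) (b := z)]
        simp only [smul_assoc]
  _ ⊆ G.smul {G.star z} (G.smul F (G.smul F (G.smul T (G.smul {f} {z})))) :=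
        smul_mono (Set.Subset.refl _)
          (smul_mono (Set.singleton_subset_iff.2 (star_mem hF hf)) (Set.Subset.refl _))
  _ = G.smul {G.star z} (G.smul F (G.smul (G.smul T {f}) {z})) := by
        rw [smul_self' hF, smul_assoc]
  _ ⊆ G.smul {G.star z} (G.smul F (G.smul (G.smul F T) {z})) := by
        refine smul_mono (Set.Subset.refl _) (smul_mono (Set.Subset.refl _)
          (smul_mono (Set.Subset.trans ?_ hswap) (Set.Subset.refl _)))
        exact smul_mono (Set.Subset.refl _) (Set.singleton_subset_iff.2 hf)
  _ = G.smul (G.smul {G.star z} F) (G.smul T {z}) := by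
        simp only [smul_assoc, smul_self' hF]
  _ ⊆ G.smul (G.smul T (G.smul F (G.smul T (G.smul {G.star z} T))))
        (G.smul T {z}) :=
        smul_mono (zstar_F_sub hT hz' F) (Set.Subset.refl _)
  _ = G.smul T (G.smul F (G.smul T (G.smul {G.star z} (G.smul T {z})))) := by
        simp only [smul_assoc, smul_self' hT]
  _ ⊆ G.smul T (G.smul F T) := by
        refine smul_mono (Set.Subset.refl _) (smul_mono (Set.Subset.refl _) ?_)
        calc G.smul T (G.smul {G.star z} (G.smul T {z}))
            ⊆ G.smul T T := smul_mono (Set.Subset.refl _) (conj_sub_T hT hz')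
        _ = T := smul_self hT
  _ ⊆ G.smul F T := by
        intro x hx
        rw [← smul_assoc] at hx
        have h2 := smul_mono hswap (Set.Subset.refl T) hx
        rw [smul_assoc, smul_self hT] at h2
        exact h2

variable {F : Set H} (hF : G.IsClosed F)
include hF

lemma ZF_swap : ∀ i : ℕ, G.smul (G.upperCentral i) F ⊆ G.smul F (G.upperCentral i)
  | 0 => by
    show G.smul {G.one} F ⊆ G.smul F {G.one}
    rw [one_smul, smul_one]
  | (i + 1) => by
    intro x hx
    rcases mem_smul.1 hx with ⟨t, ht, f, hf, hxm⟩
    have hT := Z_closed (G := G) i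
    have ht' : t ∈ PZ G (G.upperCentral i) := by
      rw [← Z_succ_PZ]; exact ht
    have hx2 : x ∈ q2 G (G.upperCentral i) f t := by
      rw [← ht'.1 f]
      exact hmul_subset_q2 hT t f hxm
    have : q2 G (G.upperCentral i) f t ⊆ G.smul F (G.upperCentral (i + 1)) := by
      calc q2 G (G.upperCentral i) f t
          = G.smul (G.smul (G.upperCentral i) {f}) (q1 G (G.upperCentral i) t) := by
            simp only [q2, q1, smul_assoc]
      _ ⊆ G.smul (G.smul (G.upperCentral i) F) (q1 G (G.upperCentral i) t) :=
            smul_mono (smul_mono (Set.Subset.refl _) (Set.singleton_subset_iff.2 hf))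
              (Set.Subset.refl _)
      _ ⊆ G.smul (G.smul F (G.upperCentral i)) (q1 G (G.upperCentral i) t) :=
            smul_mono (ZF_swap i) (Set.Subset.refl _)
      _ = G.smul F (q1 G (G.upperCentral i) t) := by
            rw [smul_assoc, q1_absorb_left hT]
      _ ⊆ G.smul F (G.upperCentral (i + 1)) :=
            smul_mono (Set.Subset.refl _) (q1_sub_Zsucc i ht)
    exact this hx2

lemma FZ_closed (i : ℕ) : G.IsClosed (G.smul F (G.upperCentral i)) := by
  have hT := Z_closed (G := G) i
  constructor
  · refine ⟨G.one, mem_smul.2 ⟨G.one, one_mem hF, G.one, one_mem hT, ?_⟩⟩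
    rw [G.hmul_one]; rfl
  · rw [sstar_smul, sstar_closed hF, sstar_closed hT]
    calc G.smul (G.smul (G.upperCentral i) F) (G.smul F (G.upperCentral i))
        ⊆ G.smul (G.smul F (G.upperCentral i)) (G.smul F (G.upperCentral i)) :=
          smul_mono (ZF_swap hF i) (Set.Subset.refl _)
    _ = G.smul F (G.smul (G.smul (G.upperCentral i) F) (G.upperCentral i)) := by
          simp only [smul_assoc]
    _ ⊆ G.smul F (G.smul (G.smul F (G.upperCentral i)) (G.upperCentral i)) :=
          smul_mono (Set.Subset.refl _) (smul_mono (ZF_swap hF i) (Set.Subset.refl _))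
    _ = G.smul F (G.upperCentral i) := by
          simp only [smul_assoc, smul_self hT, smul_self' hF]


lemma strong_step (i : ℕ) :
    G.IsStronglyNormalIn (G.smul F (G.upperCentral i))
      (G.smul F (G.upperCentral (i + 1))) := by
  intro k hk
  rcases mem_smul.1 hk with ⟨f, hf, z, hz, hkm⟩
  have hz' : z ∈ PZ G (G.upperCentral i) := by
    rw [← Z_succ_PZ]; exact hz
  exact strong_core (Z_closed i) hF (ZF_swap hF i) hf hz' hkm

end Chain

end Aux
end Hypergroup

/-- every closed subset of a finite weakly nilpotent hypergroup
is strongly subnormal: there is a chain `F = F₀ ⊆ ⋯ ⊆ Fₙ = H` of closed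
subsets with each `Fᵢ` strongly normal in `Fᵢ₊₁`. -/
theorem closed_strongly_subnormal {H : Type*} [Finite H] (G : Hypergroup H)
    (hG : G.WeaklyNilpotent) (F : Set H) (hF : G.IsClosed F) :
    ∃ n : ℕ, ∃ C : ℕ → Set H, C 0 = F ∧ C n = Set.univ ∧
      ∀ i < n, C i ⊆ C (i + 1) ∧ G.IsClosed (C (i + 1)) ∧
        G.IsStronglyNormalIn (C i) (C (i + 1)) := by
  obtain ⟨n, hn⟩ := hG
  refine ⟨n, fun i => G.smul F (G.upperCentral i), ?_, ?_, ?_⟩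
  · show G.smul F {G.one} = F
    exact Hypergroup.Aux.smul_one F
  · show G.smul F (G.upperCentral n) = Set.univ
    rw [hn]
    apply Set.eq_univ_of_forall
    intro x
    exact Hypergroup.Aux.mem_smul.2 ⟨G.one, Hypergroup.Aux.one_mem hF, x, trivial,
      by rw [Hypergroup.Aux.one_hmul]; rfl⟩
  · intro i _
    exact ⟨Hypergroup.Aux.smul_mono (Set.Subset.refl F) (Hypergroup.Aux.Z_mono i),
      Hypergroup.Aux.FZ_closed hF (i + 1), Hypergroup.Aux.strong_step hF i⟩
end
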